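/- Minimax expected regret violates the Conditional Weak Comparative Probability axiom (P4ᶜ): let S = {s₁,s₂,s₃}, let p₁, p₂, p₃ be the probability measures with p₁ = (0.25, 0.75, 0), p₂ = (0, 0, 1), p₃ = (0.25, 0, 0.75), and P = {p₁,p₂,p₃}. Let g be the act (20, 23, 5), let c_k denote the constant act with value k, and let the menu be M = {c₁, c₇, c₁₀, c₂₀, g}. For T = {s₁,s₂}, A = {s₁}, B = {s₂}, x ∈ ℝ, and acts written coordinatewise, define R(h) = max_{p∈P} Σ_{s∈S} p(s)·regret_M(h,s). Then: R((10,10,5)) = 15 < 15.25 = R((7,7,5)); R((20,20,5)) = 15 < 21.25 = R((1,1,5)); R((10,7,5)) = 15 = R((7,10,5)); and R((20,1,5)) = 16.5 > 16 = R((1,20,5)). Consequently, the preference relation ⪰ on acts defined by h ⪰ h′ iff R(h) ≤ R(h′) satisfies (10,10,5) ≻ (7,7,5), (20,20,5) ≻ (1,1,5), and (10,7,5) ⪰ (7,10,5), yet (20,1,5) ⋡ (1,20,5), so P4ᶜ fails (with w = 10, x = 7, z = 20, y = 1, where the act (w A x)Tg gives w on A, x on T∖A, and agrees with g off T). -/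

import Mathlib

open scoped BigOperators

noncomputable section

variable {S : Type*}

/-- `Pr : S → ℝ` is a probability measure on the finite state space `S`. -/
def IsProb [Fintype S] (Pr : S → ℝ) : Prop :=
  (∀ s, 0 ≤ Pr s) ∧ (∑ s, Pr s) = 1

/-- A set of weighted probability measures: each element is a pair `(Pr, α)` with `Pr`
a probability measure and `α ∈ [0,1]`, with at most one weight per measure. -/
def IsWeightedSet [Fintype S] (W : Set ((S → ℝ) × ℝ)) : Prop :=
  (∀ w ∈ W, IsProb w.1 ∧ w.2 ∈ Set.Icc (0 : ℝ) 1) ∧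
    ∀ w ∈ W, ∀ w' ∈ W, w.1 = w'.1 → w.2 = w'.2

/-- The regret of act `f` at state `s` with respect to menu `M`:
`(max_{g ∈ M} g s) - f s`. -/
def regretAt (M : Finset (S → ℝ)) (f : S → ℝ) (s : S) : ℝ :=
  sSup ((fun g => g s) '' (M : Set (S → ℝ))) - f s

/-- The maximum weighted expected regret of `f` with respect to menu `M` and the
weighted set `W` of probability measures (it is `0` when `W = ∅`, since `sSup ∅ = 0`
for real numbers). -/
def wregret [Fintype S] (W : Set ((S → ℝ) × ℝ)) (M : Finset (S → ℝ)) (f : S → ℝ) : ℝ :=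
  sSup {x | ∃ w ∈ W, x = w.2 * ∑ s, w.1 s * regretAt M f s}

/-- `C(P⁺)`: the set of subprobability vectors dominated by some weighted measure in `W`. -/
def Cset (W : Set ((S → ℝ) × ℝ)) : Set (S → ℝ) :=
  {p | (∀ s, 0 ≤ p s) ∧ ∃ w ∈ W, ∀ s, p s ≤ w.2 * w.1 s}

/-- The probability of the event `E` under `Pr`. -/
def probOf (Pr : S → ℝ) (E : Finset S) : ℝ := ∑ s ∈ E, Pr s

/-- The conditional probability measure `Pr(· | E)`. -/
def condProb [DecidableEq S] (Pr : S → ℝ) (E : Finset S) : S → ℝ :=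
  fun s => if s ∈ E then Pr s / probOf Pr E else 0

/-- Prior-by-prior updating: `P⁺|ᵖE = {(Pr|E, α) : (Pr,α) ∈ P⁺, Pr(E) > 0}`. -/
def updP [DecidableEq S] (W : Set ((S → ℝ) × ℝ)) (E : Finset S) : Set ((S → ℝ) × ℝ) :=
  {w' | ∃ w ∈ W, 0 < probOf w.1 E ∧ w' = (condProb w.1 E, w.2)}

/-- `ūP(E) = sup {α·Pr(E) : (Pr,α) ∈ P⁺}`. -/
def ubar (W : Set ((S → ℝ) × ℝ)) (E : Finset S) : ℝ :=
  sSup {x | ∃ w ∈ W, x = w.2 * probOf w.1 E}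

/-- The likelihood-updated weight `αˡ_E` of the measure `Pr|E`:
`sup {α′·Pr′(E)/ūP(E) : (Pr′,α′) ∈ P⁺, Pr′|E = Pr|E}`. -/
def alphaL [DecidableEq S] (W : Set ((S → ℝ) × ℝ)) (E : Finset S) (Pr : S → ℝ) : ℝ :=
  sSup {x | ∃ w ∈ W, condProb w.1 E = condProb Pr E ∧ x = w.2 * probOf w.1 E / ubar W E}

/-- Likelihood updating: `P⁺|ˡE = {(Pr|E, αˡ_E) : (Pr,α) ∈ P⁺, Pr(E) > 0}`. -/
def updL [DecidableEq S] (W : Set ((S → ℝ) × ℝ)) (E : Finset S) : Set ((S → ℝ) × ℝ) :=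
  {w' | ∃ w ∈ W, 0 < probOf w.1 E ∧ w' = (condProb w.1 E, alphaL W E w.1)} 

/-- The MWER choice set: those `f ∈ M'` minimizing `wregret W M` over `M'`; regret is
computed with respect to the reference menu `M` and beliefs `W`. -/
def choiceSet [Fintype S] (M : Finset (S → ℝ)) (W : Set ((S → ℝ) × ℝ))
    (M' : Finset (S → ℝ)) : Set (S → ℝ) :=
  {f | f ∈ M' ∧ ∀ g ∈ M', wregret W M f ≤ wregret W M g}

/-- The maximum weighted expected value `Ē_{W}(θ) = sup_{(Pr,α) ∈ W} α·Σ_s Pr(s)·θ(s)`. -/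
def Ebar [Fintype S] (W : Set ((S → ℝ) × ℝ)) (θ : S → ℝ) : ℝ :=
  sSup {x | ∃ w ∈ W, x = w.2 * ∑ s, w.1 s * θ s}

/-- Axiom DC-M for the weighted set `W` under the updating rule `upd`. -/
def DCM [Fintype S] [DecidableEq S]
    (upd : Set ((S → ℝ) × ℝ) → Finset S → Set ((S → ℝ) × ℝ))
    (W : Set ((S → ℝ) × ℝ)) : Prop :=
  ∀ (E F : Finset S) (M M' : Finset (S → ℝ)), M.Nonempty → M' ⊆ M →
    ∀ f ∈ M', ∀ g ∈ M',
      f ∈ choiceSet M (upd W (E ∩ F)) M' → f ∈ choiceSet M (upd W (Eᶜ ∩ F)) M' →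
        f ∈ choiceSet M (upd W F) M' ∧
          (g ∉ choiceSet M (upd W (E ∩ F)) M' → g ∉ choiceSet M (upd W F) M')

/-- Separability (SEP) of the weighted regret of `f` with respect to menu `M` and the
weighted set `W`, under the updating rule `upd`. -/
def Separable [Fintype S] [DecidableEq S]
    (upd : Set ((S → ℝ) × ℝ) → Finset S → Set ((S → ℝ) × ℝ))
    (W : Set ((S → ℝ) × ℝ)) (M : Finset (S → ℝ)) (f : S → ℝ) : Prop :=
  ∀ E F : Finset S, 0 < ubar W (E ∩ F) → 0 < ubar W (Eᶜ ∩ F) →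
    (wregret (upd W F) M f =
      sSup {x | ∃ w ∈ upd W F, x =
        w.2 * (probOf w.1 (E ∩ F) * wregret (upd W (E ∩ F)) M f +
          probOf w.1 (Eᶜ ∩ F) * wregret (upd W (Eᶜ ∩ F)) M f)}) ∧
    (wregret (upd W (E ∩ F)) M f ≠ 0 →
      sSup {x | ∃ w ∈ upd W F, x =
        w.2 * probOf w.1 (Eᶜ ∩ F) * wregret (upd W (Eᶜ ∩ F)) M f} <
        wregret (upd W F) M f)

/-- `p`-rectangularity of the weighted set `W` (prior-by-prior updating; the updated
weights equal the original weights). -/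
def pRectangular [Fintype S] [DecidableEq S] (W : Set ((S → ℝ) × ℝ)) : Prop :=
  ∀ E F : Finset S,
    (∀ w₁ ∈ W, ∀ w₂ ∈ W, ∀ w₃ ∈ W,
      0 < probOf w₁.1 (E ∩ F) → 0 < probOf w₂.1 (Eᶜ ∩ F) →
      (fun s => w₃.2 * probOf w₃.1 (E ∩ F) * (w₁.2 * condProb w₁.1 (E ∩ F) s) +
          w₃.2 * probOf w₃.1 (Eᶜ ∩ F) * (w₂.2 * condProb w₂.1 (Eᶜ ∩ F) s)) ∈
        closure (Cset (updP W F))) ∧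
    (∀ δ : ℝ, 0 < δ → 0 < ubar W F →
      ∃ w ∈ updP W F,
        sSup {x | ∃ w' ∈ W, x = w'.2 * probOf w'.1 (Eᶜ ∩ F)} <
          w.2 * (δ * probOf w.1 (E ∩ F) + probOf w.1 (Eᶜ ∩ F))) ∧
    (∀ θ : S → ℝ, (∀ s, 0 ≤ θ s) →
      Ebar (updP W F) θ ≤
        sSup {x | ∃ w ∈ updP W F, x =
          w.2 * (probOf w.1 (E ∩ F) * Ebar (updP W (E ∩ F)) θ +
            probOf w.1 (Eᶜ ∩ F) * Ebar (updP W (Eᶜ ∩ F)) θ)})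

/-- `l`-rectangularity of the weighted set `W` (likelihood updating; the updated
weights are the likelihood-updated weights `αˡ`). -/
def lRectangular [Fintype S] [DecidableEq S] (W : Set ((S → ℝ) × ℝ)) : Prop :=
  ∀ E F : Finset S,
    (∀ w₁ ∈ W, ∀ w₂ ∈ W, ∀ w₃ ∈ W,
      0 < probOf w₁.1 (E ∩ F) → 0 < probOf w₂.1 (Eᶜ ∩ F) →
      (fun s => w₃.2 * probOf w₃.1 (E ∩ F) * (alphaL W (E ∩ F) w₁.1 * condProb w₁.1 (E ∩ F) s) +
          w₃.2 * probOf w₃.1 (Eᶜ ∩ F) * (alphaL W (Eᶜ ∩ F) w₂.1 * condProb w₂.1 (Eᶜ ∩ F) s)) ∈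
        closure (Cset (updL W F))) ∧
    (∀ δ : ℝ, 0 < δ → 0 < ubar W F →
      ∃ w ∈ updL W F,
        sSup {x | ∃ w' ∈ W, x = w'.2 * probOf w'.1 (Eᶜ ∩ F)} <
          w.2 * (δ * probOf w.1 (E ∩ F) + probOf w.1 (Eᶜ ∩ F))) ∧
    (∀ θ : S → ℝ, (∀ s, 0 ≤ θ s) →
      Ebar (updL W F) θ ≤
        sSup {x | ∃ w ∈ updL W F, x =
          w.2 * (probOf w.1 (E ∩ F) * Ebar (updL W (E ∩ F)) θ +
            probOf w.1 (Eᶜ ∩ F) * Ebar (updL W (Eᶜ ∩ F)) θ)})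

/-- The probability measure `p₁ = (0.25, 0.75, 0)`. -/
def pa : Fin 3 → ℝ := ![0.25, 0.75, 0]

/-- The probability measure `p₂ = (0, 0, 1)`. -/
def pb : Fin 3 → ℝ := ![0, 0, 1]

/-- The probability measure `p₃ = (0.25, 0, 0.75)`. -/
def pc : Fin 3 → ℝ := ![0.25, 0, 0.75]

/-- The act `g = (20, 23, 5)`. -/
def gAct : Fin 3 → ℝ := ![20, 23, 5]

/-- The constant act with value `k`. -/
def cAct (k : ℝ) : Fin 3 → ℝ := fun _ => k

/-- The menu `M = {c₁, c₇, c₁₀, c₂₀, g}`. -/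
noncomputable def menu16 : Finset (Fin 3 → ℝ) :=
  {cAct 1, cAct 7, cAct 10, cAct 20, gAct}

/-- `R(h) = max_{p ∈ {p₁,p₂,p₃}} Σ_s p(s)·regret_M(h,s)`. -/
noncomputable def R16 (h : Fin 3 → ℝ) : ℝ :=
  max (∑ s, pa s * regretAt menu16 h s)
    (max (∑ s, pb s * regretAt menu16 h s) (∑ s, pc s * regretAt menu16 h s))

lemma sup_menu (s : Fin 3) :
    sSup ((fun g => g s) '' (menu16 : Set (Fin 3 → ℝ))) = ![20,23,20] s := by
  refine IsGreatest.csSup_eq ⟨?_, ?_⟩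
  · fin_cases s
    · exact ⟨cAct 20, by simp [menu16], rfl⟩
    · exact ⟨gAct, by simp [menu16], rfl⟩
    · exact ⟨cAct 20, by simp [menu16], rfl⟩
  · rintro x ⟨g, hg, rfl⟩
    simp only [menu16, Finset.coe_insert, Set.mem_insert_iff, Finset.coe_singleton,
      Set.mem_singleton_iff] at hg
    fin_cases s <;> rcases hg with rfl|rfl|rfl|rfl|rfl <;> norm_num [cAct, gAct]

lemma regret_menu (h : Fin 3 → ℝ) (s : Fin 3) :
    regretAt menu16 h s = ![20,23,20] s - h s := by
  rw [regretAt, sup_menu]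

lemma R16_eval (h : Fin 3 → ℝ) :
    R16 h = max (0.25 * (20 - h 0) + 0.75 * (23 - h 1))
      (max (20 - h 2) (0.25 * (20 - h 0) + 0.75 * (20 - h 2))) := by
  simp only [R16, regret_menu, Fin.sum_univ_three, pa, pb, pc]
  norm_num [Matrix.cons_val_zero, Matrix.cons_val_one, Matrix.cons_val_two, Matrix.head_cons]

/-- MER violates the Conditional Weak Comparative Probability axiom
(P4ᶜ): the stated maximum-expected-regret values hold, and consequently
`(10,10,5) ≻ (7,7,5)`, `(20,20,5) ≻ (1,1,5)`, `(10,7,5) ⪰ (7,10,5)`, yet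
`(20,1,5) ⋡ (1,20,5)` (where `h ⪰ h′` iff `R(h) ≤ R(h′)`). -/
theorem stmt_16 :
    R16 ![10, 10, 5] = 15 ∧
    R16 ![7, 7, 5] = 15.25 ∧
    R16 ![20, 20, 5] = 15 ∧
    R16 ![1, 1, 5] = 21.25 ∧
    R16 ![10, 7, 5] = 15 ∧
    R16 ![7, 10, 5] = 15 ∧
    R16 ![20, 1, 5] = 16.5 ∧
    R16 ![1, 20, 5] = 16 ∧
    R16 ![10, 10, 5] < R16 ![7, 7, 5] ∧
    R16 ![20, 20, 5] < R16 ![1, 1, 5] ∧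
    R16 ![10, 7, 5] ≤ R16 ![7, 10, 5] ∧
    ¬ (R16 ![20, 1, 5] ≤ R16 ![1, 20, 5]) := by
  norm_num [R16_eval, Matrix.cons_val_zero, Matrix.cons_val_one, Matrix.cons_val_two, Matrix.head_cons,
    max_def]
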